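/- Let S be a symmetric positive definite d×d real matrix such that every off-diagonal entry of S^{-1} is nonpositive, let Σ_E = diag(a_1,…,a_d) with a_j ≥ 0 for all j, and let Ω = (Σ_E + S)^{-1}. Let β_X ∈ R^d have all entries nonpositive. If the j-th entry of β_X is zero for some index j, then the j-th entry of the measurement error bias vector −Ω Σ_E β_X is nonpositive. -/

import Mathlib

open Matrix

/-- Diagonal entries of a real positive definite matrix are positive. -/
lemma posdef_diag_pos {d : ℕ} {A : Matrix (Fin d) (Fin d) ℝ} (hA : A.PosDef) (i : Fin d) :
    0 < A i i := by
  exact hA.diag_pos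

/-- Rank-one diagonal update preserves positive definiteness and
nonpositivity of off-diagonal entries of the inverse. -/
lemma rank_one_update {d : ℕ} {M : Matrix (Fin d) (Fin d) ℝ} (hM : M.PosDef)
    (hZ : ∀ j k : Fin d, j ≠ k → M⁻¹ j k ≤ 0) (i : Fin d) (c : ℝ) (hc : 0 ≤ c) :
    (M + Matrix.diagonal (Pi.single i c)).PosDef ∧
      ∀ j k : Fin d, j ≠ k → (M + Matrix.diagonal (Pi.single i c))⁻¹ j k ≤ 0 := by
  have hPD : (M + Matrix.diagonal (Pi.single i c)).PosDef :=
    hM.add_posSemidef (Matrix.PosSemidef.diagonal (by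
      intro k; by_cases h : k = i <;> simp [h, Pi.single_apply, hc]))
  set A : Matrix (Fin d) (Fin d) ℝ := M⁻¹ with hA
  have hAii : 0 < A i i := posdef_diag_pos hM.inv i
  have hden : 0 < 1 + c * A i i := by nlinarith
  set t : ℝ := c / (1 + c * A i i) with ht
  have htden : t * (1 + c * A i i) = c := div_mul_cancel₀ _ (ne_of_gt hden)
  have ht0 : 0 ≤ t := div_nonneg hc hden.le
  set E : Matrix (Fin d) (Fin d) ℝ := Matrix.single i i 1 with hE
  have hDE : Matrix.diagonal (Pi.single i c) = c • E := by
    ext j k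
    by_cases hj : i = j
    · subst hj
      by_cases hk : i = k <;>
        simp [hE, Matrix.single, Matrix.diagonal_apply, Pi.single_apply, hk]
    · simp [hE, Matrix.single, Matrix.diagonal_apply, Pi.single_apply, hj,
        Ne.symm hj]
  have hMA : M * A = 1 := Matrix.mul_nonsing_inv M (isUnit_iff_ne_zero.mpr hM.det_pos.ne')
  have hEAE : E * A * E = (A i i) • E := by
    ext j k
    simp [hE, Matrix.mul_apply, Matrix.single, Finset.sum_ite_eq, mul_comm,
      ite_and, Finset.sum_ite_eq']
    by_cases hj : j = i <;> by_cases hk : i = k <;> simp [hj, hk, mul_comm]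
  have hinv : (M + Matrix.diagonal (Pi.single i c))⁻¹ = A - t • (A * E * A) := by
    apply Matrix.inv_eq_right_inv
    have expand : (M + Matrix.diagonal (Pi.single i c)) * (A - t • (A * E * A))
        = M * A - t • (M * A * E * A) + c • (E * A) - (t * c) • (E * A * E * A) := by
      rw [hDE]
      noncomm_ring <;> module
    rw [expand, hMA, one_mul, hEAE, smul_mul_assoc, smul_smul]
    have key : (1 : Matrix (Fin d) (Fin d) ℝ) - t • (E * A) + c • (E * A)
        - (t * c * A i i) • (E * A) = 1 + (c - t - t * c * A i i) • (E * A) := by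
      module
    rw [key]
    have h0 : c - t - t * c * A i i = 0 := by nlinarith [htden]
    rw [h0, zero_smul, add_zero]
  have hAEA : ∀ j k : Fin d, (A * E * A) j k = A j i * A i k := by
    intro j k
    simp [hE, Matrix.mul_apply, Matrix.single, ite_and, Finset.sum_ite_eq,
      Finset.sum_ite_eq', Finset.mul_sum, Finset.sum_mul]
  refine ⟨hPD, fun j k hjk => ?_⟩
  rw [hinv]
  simp only [Matrix.sub_apply, Matrix.smul_apply, hAEA, smul_eq_mul]
  have hone : t * A i i ≤ 1 := by
    rw [ht, div_mul_eq_mul_div, div_le_one hden]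
    nlinarith
  by_cases hj : j = i
  · subst hj
    have hk : A j k ≤ 0 := hZ j k hjk
    nlinarith [mul_nonneg (sub_nonneg.mpr hone) (neg_nonneg.mpr hk)]
  · by_cases hk : k = i
    · subst hk
      have hj' : A j k ≤ 0 := hZ j k hjk
      nlinarith [mul_nonneg (sub_nonneg.mpr hone) (neg_nonneg.mpr hj')]
    · have h1 : A j k ≤ 0 := hZ j k hjk
      have h2 : A j i ≤ 0 := hZ j i hj
      have h3 : A i k ≤ 0 := hZ i k (fun h => hk h.symm)
      have h4 : 0 ≤ t * (A j i * A i k) :=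
        mul_nonneg ht0 (mul_nonneg_iff.mpr (Or.inr ⟨h2, h3⟩))
      linarith

/-- Adding a nonnegative diagonal preserves PD and the Z-sign pattern of the inverse. -/
lemma diag_update {d : ℕ} (S : Matrix (Fin d) (Fin d) ℝ) (hS : S.PosDef)
    (hSinv : ∀ j k : Fin d, j ≠ k → S⁻¹ j k ≤ 0) :
    ∀ (s : Finset (Fin d)) (f : Fin d → ℝ), (∀ i, 0 ≤ f i) → (∀ i ∉ s, f i = 0) →
      (Matrix.diagonal f + S).PosDef ∧
        ∀ j k : Fin d, j ≠ k → (Matrix.diagonal f + S)⁻¹ j k ≤ 0 := by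
  intro s
  induction s using Finset.induction_on with
  | empty =>
    intro f _ hsupp
    have : f = 0 := funext fun i => hsupp i (Finset.notMem_empty i)
    subst this
    have h0 : Matrix.diagonal (0 : Fin d → ℝ) + S = S := by
      ext j k
      by_cases h : j = k <;> simp [Matrix.diagonal_apply, h]
    rw [h0]
    exact ⟨hS, hSinv⟩
  | insert i s' hnew ih =>
    intro f hf hsupp
    set g : Fin d → ℝ := Function.update f i 0 with hg
    have hg0 : ∀ k, 0 ≤ g k := by
      intro k; by_cases h : k = i <;> simp [hg, Function.update, h, hf k]
    have hgsupp : ∀ k ∉ s', g k = 0 := by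
      intro k hk
      by_cases h : k = i
      · simp [hg, h]
      · simp [hg, Function.update, h]
        exact hsupp k (by simp [h, hk])
    obtain ⟨hPD, hZ⟩ := ih g hg0 hgsupp
    have key := rank_one_update hPD hZ i (f i) (hf i)
    have heq : Matrix.diagonal g + S + Matrix.diagonal (Pi.single i (f i))
        = Matrix.diagonal f + S := by
      ext j k
      by_cases hj : j = k
      · subst hj
        by_cases h : j = i <;>
          simp [Matrix.diagonal, hg, Function.update, Pi.single_apply, h] <;> ring
      · simp [Matrix.diagonal_apply_ne _ hj]
    rw [heq] at key
    exact key

/-- Null pollutants have nonpositive measurement error bias: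
if `S` is symmetric positive definite with nonpositive off-diagonal entries of
`S⁻¹`, `Σ_E = diagonal a` with `a ≥ 0`, `βX ≤ 0` entrywise, and `βX j = 0`,
then the `j`-th entry of `-Ω Σ_E βX` (with `Ω = (Σ_E + S)⁻¹`) is nonpositive. -/
theorem null_pollutant_bias_nonpos
    (d : ℕ) (S : Matrix (Fin d) (Fin d) ℝ) (hS : S.PosDef)
    (hSinv : ∀ j j' : Fin d, j ≠ j' → S⁻¹ j j' ≤ 0)
    (a : Fin d → ℝ) (ha : ∀ j, 0 ≤ a j)
    (βX : Fin d → ℝ) (hβX : ∀ j, βX j ≤ 0)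
    (j : Fin d) (hβXj : βX j = 0) :
    (-(((Matrix.diagonal a + S)⁻¹ * Matrix.diagonal a).mulVec βX)) j ≤ 0 := by
  obtain ⟨hPD, hZ⟩ := diag_update S hS hSinv Finset.univ a ha (by simp)
  have : (((Matrix.diagonal a + S)⁻¹ * Matrix.diagonal a).mulVec βX) j
      = ∑ k, (Matrix.diagonal a + S)⁻¹ j k * (a k * βX k) := by
    rw [← Matrix.mulVec_mulVec]
    simp [Matrix.mulVec, dotProduct, Matrix.diagonal_apply, ite_mul, zero_mul,
      Finset.sum_ite_eq]
  simp only [Pi.neg_apply, neg_nonpos, this]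
  apply Finset.sum_nonneg
  intro k _
  by_cases hk : k = j
  · subst hk; simp [hβXj]
  · have h1 := hZ j k (fun h => hk h.symm)
    have h2 : a k * βX k ≤ 0 := mul_nonpos_iff.mpr (Or.inl ⟨ha k, hβX k⟩)
    exact mul_nonneg_iff.mpr (Or.inr ⟨h1, h2⟩)
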